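/- If y ≤ x/2 and x > 0, y > 0, then for every a ∈ [0,1], a·u_FS,FDM(x,y) + (1−a)·u_FS,FS(x,y) ≥ a·u_FDM,FDM(x,y) + (1−a)·u_FDM,FS(x,y), where u_FDM,FDM(x,y) = (1/2)log₂(1+x), u_FDM,FS(x,y) = (1/2)log₂(1 + x/(1+y/2)), u_FS,FDM(x,y) = (1/2)log₂(1+x/2) + (1/2)log₂(1 + (x/2)/(1+y)), u_FS,FS(x,y) = log₂(1 + (x/2)/(1+y/2)). -/

import Mathlib

noncomputable def uFDMFDM (x _y : ℝ) : ℝ := (1/2) * Real.logb 2 (1 + x)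
noncomputable def uFDMFS (x y : ℝ) : ℝ := (1/2) * Real.logb 2 (1 + x/(1 + y/2))
noncomputable def uFSFDM (x y : ℝ) : ℝ :=
  (1/2) * Real.logb 2 (1 + x/2) + (1/2) * Real.logb 2 (1 + (x/2)/(1+y))
noncomputable def uFSFS (x y : ℝ) : ℝ := Real.logb 2 (1 + (x/2)/(1 + y/2))

theorem fs_dominant (x y : ℝ) (hx : 0 < x) (hy : 0 < y) (hyx : y ≤ x/2)
    (a : ℝ) (ha0 : 0 ≤ a) (ha1 : a ≤ 1) :
    a * uFSFDM x y + (1 - a) * uFSFS x y ≥ a * uFDMFDM x y + (1 - a) * uFDMFS x y := by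
  have hy1 : (0:ℝ) < 1 + y := by linarith
  have hy2 : (0:ℝ) < 1 + y/2 := by linarith
  have h1 : uFDMFDM x y ≤ uFSFDM x y := by
    unfold uFDMFDM uFSFDM
    rw [← mul_add, ← Real.logb_mul (by positivity) (by positivity)]
    have key : 1 + x ≤ (1 + x/2) * (1 + (x/2)/(1+y)) := by
      have h : 1 + (x/2)/(1+y) = ((1+y) + x/2)/(1+y) := by field_simp
      rw [h, mul_div_assoc', le_div_iff₀ hy1]
      nlinarith [mul_nonneg hx.le (by linarith : 0 ≤ x/2 - y)]
    have := Real.logb_le_logb_of_le one_lt_two (by linarith) key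
    linarith
  have h2 : uFDMFS x y ≤ uFSFS x y := by
    unfold uFDMFS uFSFS
    have hsq : (2:ℝ) * Real.logb 2 (1 + (x/2)/(1 + y/2))
        = Real.logb 2 ((1 + (x/2)/(1 + y/2))^2) := by
      rw [Real.logb_pow]; push_cast; ring
    have key : 1 + x/(1 + y/2) ≤ (1 + (x/2)/(1 + y/2))^2 := by
      have h : (1 + (x/2)/(1 + y/2))^2
          = 1 + x/(1 + y/2) + (x/(2*(1+y/2)))^2 := by field_simp; ring
      nlinarith [sq_nonneg (x/(2*(1+y/2)))]
    have := Real.logb_le_logb_of_le one_lt_two (by positivity) key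
    rw [← hsq] at this
    linarith
  nlinarith [mul_le_mul_of_nonneg_left h1 ha0,
    mul_le_mul_of_nonneg_left h2 (by linarith : (0:ℝ) ≤ 1 - a)]
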